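/- Let A be a complex *-algebra, p a C*-seminorm on A, σ a submultiplicative seminorm on A, and C ≥ 0 a constant with p(x) ≤ C·σ(x) for all x ∈ A. Then p(a)² ≤ σ(a* a) for every a ∈ A. Consequently, if moreover σ(a*) ≤ D·σ(a) for all a ∈ A and some constant D ≥ 0, then p(a) ≤ √D·σ(a) for all a ∈ A. -/

import Mathlib

open Set

/-- Let `p` be a C*-seminorm and `σ` a submultiplicative seminorm on a complex `*`-algebra `A`,
with `p ≤ C·σ`. Then `p(a)² ≤ σ(a* a)`; consequently, if `σ(a*) ≤ D·σ(a)`, then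
`p(a) ≤ √D·σ(a)`. -/
theorem cstarSeminorm_sq_le_of_le_smul {A : Type*} [Ring A] [Algebra ℂ A] [StarRing A]
    [StarModule ℂ A] (p σ : Seminorm ℂ A)
    (hpsub : ∀ a b : A, p (a * b) ≤ p a * p b)
    (hpcstar : ∀ a : A, p (star a * a) = p a ^ 2)
    (hσsub : ∀ a b : A, σ (a * b) ≤ σ a * σ b)
    (C : ℝ) (hC : 0 ≤ C) (hle : ∀ x : A, p x ≤ C * σ x) :
    (∀ a : A, p a ^ 2 ≤ σ (star a * a)) ∧
      ∀ D : ℝ, 0 ≤ D → (∀ a : A, σ (star a) ≤ D * σ a) →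
        ∀ a : A, p a ≤ Real.sqrt D * σ a := by
  -- σ is submultiplicative on powers
  have hσpow : ∀ (x : A) (n : ℕ), σ (x ^ (n + 1)) ≤ σ x ^ (n + 1) := by
    intro x n
    induction n with
    | zero => simp
    | succ k ih =>
      calc σ (x ^ (k + 2)) = σ (x ^ (k + 1) * x) := by rw [pow_succ]
        _ ≤ σ (x ^ (k + 1)) * σ x := hσsub _ _
        _ ≤ σ x ^ (k + 1) * σ x := by
            exact mul_le_mul_of_nonneg_right ih (apply_nonneg σ x)
        _ = σ x ^ (k + 2) := by ring
  -- key: for self-adjoint b, p b ≤ σ b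
  have key : ∀ b : A, star b = b → p b ≤ σ b := by
    intro b hb
    have hppow : ∀ n : ℕ, p (b ^ 2 ^ n) = p b ^ 2 ^ n := by
      intro n
      induction n with
      | zero => simp
      | succ k ih =>
        have hstar : star (b ^ 2 ^ k) = b ^ 2 ^ k := by rw [star_pow, hb]
        calc p (b ^ 2 ^ (k + 1)) = p (b ^ 2 ^ k * b ^ 2 ^ k) := by
              rw [← pow_add]; ring_nf
          _ = p (star (b ^ 2 ^ k) * b ^ 2 ^ k) := by rw [hstar]
          _ = p (b ^ 2 ^ k) ^ 2 := hpcstar _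
          _ = p b ^ 2 ^ (k + 1) := by rw [ih, ← pow_mul]; ring_nf
    have hmain : ∀ n : ℕ, p b ^ 2 ^ n ≤ C * σ b ^ 2 ^ n := by
      intro n
      have h1 : p (b ^ 2 ^ n) ≤ C * σ (b ^ 2 ^ n) := hle _
      have h2 : σ (b ^ 2 ^ n) ≤ σ b ^ 2 ^ n := by
        have := hσpow b (2 ^ n - 1)
        have h2n : 2 ^ n - 1 + 1 = 2 ^ n := Nat.succ_pred_eq_of_pos (Nat.pow_pos (n := n) (by norm_num))
        rwa [h2n] at this
      calc p b ^ 2 ^ n = p (b ^ 2 ^ n) := (hppow n).symm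
        _ ≤ C * σ (b ^ 2 ^ n) := h1
        _ ≤ C * σ b ^ 2 ^ n := mul_le_mul_of_nonneg_left h2 hC
    by_contra hcon
    push_neg at hcon
    have hσb : 0 ≤ σ b := apply_nonneg σ b
    set r := p b / σ b with hr
    have hσbpos : 0 < σ b := by
      rcases lt_or_eq_of_le hσb with h | h
      · exact h
      · exfalso
        have := hmain 1
        simp [← h] at this
        have : p b ^ 2 ^ 1 ≤ 0 := by
          have := hmain 1; rw [← h] at this; simpa using this
        have hpb : p b = 0 := by
          nlinarith [apply_nonneg p b]
        rw [hpb, ← h] at hcon; exact lt_irrefl 0 hcon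
    have hr1 : 1 < r := (one_lt_div hσbpos).mpr hcon
    have hrn : ∀ n : ℕ, r ^ 2 ^ n ≤ C := by
      intro n
      have := hmain n
      rw [hr, div_pow]
      rw [div_le_iff₀ (by positivity)]
      linarith
    obtain ⟨n, hn⟩ := pow_unbounded_of_one_lt C hr1
    have : r ^ n ≤ r ^ 2 ^ n := pow_le_pow_right₀ (le_of_lt hr1) (Nat.lt_two_pow_self (n := n)).le
    linarith [hrn n]
  have part1 : ∀ a : A, p a ^ 2 ≤ σ (star a * a) := by
    intro a
    rw [← hpcstar a]
    exact key _ (by simp [mul_comm])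
  refine ⟨part1, ?_⟩
  intro D hD hDs a
  have h1 : p a ^ 2 ≤ σ (star a * a) := part1 a
  have h2 : σ (star a * a) ≤ D * σ a ^ 2 := by
    calc σ (star a * a) ≤ σ (star a) * σ a := hσsub _ _
      _ ≤ (D * σ a) * σ a := mul_le_mul_of_nonneg_right (hDs a) (apply_nonneg σ a)
      _ = D * σ a ^ 2 := by ring
  have h3 : p a ^ 2 ≤ (Real.sqrt D * σ a) ^ 2 := by
    rw [mul_pow, Real.sq_sqrt hD]
    linarith
  calc p a = Real.sqrt (p a ^ 2) := (Real.sqrt_sq (apply_nonneg p a)).symm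
    _ ≤ Real.sqrt ((Real.sqrt D * σ a) ^ 2) := Real.sqrt_le_sqrt h3
    _ = Real.sqrt D * σ a := Real.sqrt_sq (by positivity)
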